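/- Sequential composition distributes over parallel composition on the right only sub-distributively: for all multirelations R, S, T over X, (R‖S) · T ⊆ (R·T)‖(S·T), and there exist multirelations witnessing that the reverse inclusion fails. -/
import Mathlib


open Set

/-- Sequential composition of multirelations (Peleg). -/
def mseq {X : Type*} (R S : Set (X × Set X)) : Set (X × Set X) :=
  {p | ∃ B, (p.1, B) ∈ R ∧ ∃ f : X → Set X, (∀ b ∈ B, (b, f b) ∈ S) ∧ p.2 = ⋃ b ∈ B, f b}

/-- The unit of sequential composition. -/
def sunit (X : Type*) : Set (X × Set X) := {p | p.2 = {p.1}}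

/-- Parallel (concurrent) composition of multirelations. -/
def mpar {X : Type*} (R S : Set (X × Set X)) : Set (X × Set X) :=
  {p | ∃ A B, (p.1, A) ∈ R ∧ (p.1, B) ∈ S ∧ p.2 = A ∪ B}

/-- The unit of parallel composition. -/
def punit (X : Type*) : Set (X × Set X) := {p | p.2 = (∅ : Set X)}

/-- Domain of a multirelation. -/
def mdom {X : Type*} (R : Set (X × Set X)) : Set (X × Set X) :=
  {p | p.2 = {p.1} ∧ ∃ A, (p.1, A) ∈ R}

/-- Antidomain of a multirelation. -/
def mantidom {X : Type*} (R : Set (X × Set X)) : Set (X × Set X) :=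
  {p | p.2 = {p.1} ∧ ¬ ∃ A, (p.1, A) ∈ R}

/-- Diamond operator. -/
def mdia {X : Type*} (R P : Set (X × Set X)) : Set (X × Set X) := mdom (mseq R P)

theorem stmt6 :
    (∀ (X : Type) (R S T : Set (X × Set X)),
        mseq (mpar R S) T ⊆ mpar (mseq R T) (mseq S T)) ∧
    (∃ (X : Type) (R S T : Set (X × Set X)),
        ¬ mpar (mseq R T) (mseq S T) ⊆ mseq (mpar R S) T) := by
  constructor
  · rintro X R S T ⟨a, C⟩ ⟨B, ⟨A, B', hA, hB', rfl⟩, f, hf, rfl⟩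
    refine ⟨⋃ b ∈ A, f b, ⋃ b ∈ B', f b, ⟨A, hA, f, fun b hb => hf b (Or.inl hb), rfl⟩,
      ⟨B', hB', f, fun b hb => hf b (Or.inr hb), rfl⟩, ?_⟩
    exact biUnion_union A B' f
  · refine ⟨Bool, {(true, {true})}, {(true, {true})},
      {(true, {true}), (true, {false})}, fun h => ?_⟩
    have hmem : ((true, ({true, false} : Set Bool)) : Bool × Set Bool) ∈
        mpar (mseq {(true, {true})} {(true, {true}), (true, {false})})
             (mseq {(true, {true})} {(true, {true}), (true, {false})}) := by
      refine ⟨{true}, {false}, ⟨{true}, rfl, fun _ => {true}, ?_, by simp⟩,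
        ⟨{true}, rfl, fun _ => {false}, ?_, by simp⟩, rfl⟩
      · rintro b hb; simp at hb; subst hb; left; rfl
      · rintro b hb; simp at hb; subst hb; right; rfl
    obtain ⟨B, hB, f, hf, heq⟩ := h hmem
    simp only [mem_singleton_iff, Prod.mk.injEq] at hB
    obtain ⟨A, B', hA, hB', rfl⟩ := hB
    simp only [mem_singleton_iff, Prod.mk.injEq, true_and] at hA hB'
    subst hA; subst hB'
    have heq' : ({true, false} : Set Bool) = f true := by
      simpa using heq
    have := hf true (by simp)
    simp only [mem_insert_iff, mem_singleton_iff, Prod.mk.injEq, true_and] at this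
    rcases this with h1 | h1 <;> rw [h1] at heq' <;>
      · have := heq' ▸ (by simp : (false : Bool) ∈ ({true, false} : Set Bool))
        simp_all
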